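/- Let A > 1, T ≥ 1, r ≥ 1, 0 ≤ p_e ≤ 1, W > 0, d ≥ 0, and set q = p_e + (1 - p_e)/2^r. Suppose q·A^T < 1. If E Δ_ℓ satisfies E Δ_{ℓ+1} = q·A^T·E Δ_ℓ + q·((A^T - 1)/(A - 1))·W with E Δ_0 ≥ 0, then limsup_{ℓ→∞} of the error bound (1/2)·(A^d·E Δ_ℓ + ((A^d - 1)/(A - 1))·W) equals (1/2) · (A^d + q·(A^T - A^d) - 1)/(1 - q·A^T) · W/(A - 1). -/

import Mathlib

theorem stmt_5 (A W pe q : ℝ) (T r d : ℕ) (hA : 1 < A) (hT : 1 ≤ T) (hr : 1 ≤ r)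
    (hpe0 : 0 ≤ pe) (hpe1 : pe ≤ 1) (hW : 0 < W)
    (hq : q = pe + (1 - pe) / 2 ^ r) (hstab : q * A ^ T < 1)
    (EΔ : ℕ → ℝ) (h0 : 0 ≤ EΔ 0)
    (hrec : ∀ ℓ, EΔ (ℓ + 1) = q * A ^ T * EΔ ℓ + q * ((A ^ T - 1) / (A - 1)) * W) :
    Filter.limsup (fun ℓ => (1 / 2) * (A ^ d * EΔ ℓ + (A ^ d - 1) / (A - 1) * W))
        Filter.atTop
      = 1 / 2 * ((A ^ d + q * (A ^ T - A ^ d) - 1) / (1 - q * A ^ T)) * (W / (A - 1)) := by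
  set c : ℝ := q * A ^ T with hc
  have hq0 : 0 ≤ q := by
    rw [hq]
    have : (0:ℝ) ≤ (1 - pe) / 2 ^ r := div_nonneg (by linarith) (by positivity)
    linarith
  have hc0 : 0 ≤ c := by
    have : (0:ℝ) ≤ A ^ T := by positivity
    exact mul_nonneg hq0 this
  have hcne : 1 - c ≠ 0 := by linarith
  set L : ℝ := q * ((A ^ T - 1) / (A - 1)) * W / (1 - c) with hL
  have hfix : c * L + q * ((A ^ T - 1) / (A - 1)) * W = L := by
    have h := div_mul_cancel₀ (q * ((A ^ T - 1) / (A - 1)) * W) hcne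
    linear_combination -h
  have hform : ∀ ℓ, EΔ ℓ = c ^ ℓ * (EΔ 0 - L) + L := by
    intro ℓ
    induction ℓ with
    | zero => simp
    | succ n ih =>
      rw [hrec n, ih]
      rw [pow_succ]
      linarith [hfix, mul_comm c (c ^ n * (EΔ 0 - L))]
  have htend : Filter.Tendsto EΔ Filter.atTop (nhds L) := by
    have h1 : Filter.Tendsto (fun ℓ : ℕ => c ^ ℓ) Filter.atTop (nhds 0) :=
      tendsto_pow_atTop_nhds_zero_of_lt_one hc0 hstab
    have h2 : Filter.Tendsto (fun ℓ : ℕ => c ^ ℓ * (EΔ 0 - L) + L) Filter.atTop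
        (nhds (0 * (EΔ 0 - L) + L)) := by
      exact Filter.Tendsto.add (h1.mul_const _) tendsto_const_nhds
    simp only [zero_mul, zero_add] at h2
    exact h2.congr (fun ℓ => (hform ℓ).symm)
  have htend2 : Filter.Tendsto (fun ℓ => (1 / 2) * (A ^ d * EΔ ℓ + (A ^ d - 1) / (A - 1) * W))
      Filter.atTop (nhds ((1 / 2) * (A ^ d * L + (A ^ d - 1) / (A - 1) * W))) := by
    exact (((htend.const_mul _).add tendsto_const_nhds).const_mul _)
  rw [htend2.limsup_eq]
  have hAne : A - 1 ≠ 0 := by linarith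
  rw [hL, hc]
  have hcne' : 1 - q * A ^ T ≠ 0 := hcne
  field_simp
  ring
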